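/- arXiv:1911.08974 — 2 statements merged into one kernel-verified Lean document; each statement's English description precedes it below -/
import Mathlib

section
/- For 0 < α < 1, the integral ∫₀¹ x^{α-2} ( -(1-x)^{-α} + (1+x)^{-α} ) dx equals 2^{1-α}/(α-1). -/
open Set Filter MeasureTheory Real

-- generic MVT bound on [0, 1/2]
lemma my_mvt {k k' : ℝ → ℝ} {C : ℝ}
    (hd : ∀ t ∈ Set.Icc (0:ℝ) (1/2), HasDerivAt k (k' t) t)
    (hb : ∀ t ∈ Set.Icc (0:ℝ) (1/2), |k' t| ≤ C)
    {x : ℝ} (hx : x ∈ Set.Icc (0:ℝ) (1/2)) : |k x - k 0| ≤ C * x := by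
  have h := Convex.norm_image_sub_le_of_norm_hasDerivWithin_le
    (f := k) (f' := k') (s := Set.Icc (0:ℝ) (1/2))
    (fun t ht => (hd t ht).hasDerivWithinAt) hb
    (convex_Icc _ _) (Set.left_mem_Icc.2 (by norm_num)) hx
  simpa [Real.norm_eq_abs, abs_of_nonneg hx.1] using h

lemma bound_neg {α : ℝ} (hα0 : 0 < α) (hα1 : α < 1) {x : ℝ}
    (hx : x ∈ Set.Icc (0:ℝ) (1/2)) :
    |(1-x)^(-α) - (1+x)^(-α)| ≤ 5 * x := by
  have h0 : ((1-(0:ℝ))^(-α) - (1+(0:ℝ))^(-α)) = 0 := by norm_num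
  have key := my_mvt (k := fun t => (1-t)^(-α) - (1+t)^(-α))
    (k' := fun t => α * (1-t)^(-α-1) + α * (1+t)^(-α-1)) (C := 5)
    (fun t ht => by
      have h1t : (0:ℝ) < 1 - t := by linarith [ht.2]
      have d1 : HasDerivAt (fun t : ℝ => (1-t)^(-α)) ((-1) * (-α) * (1-t)^(-α-1)) t :=
        ((hasDerivAt_id t).const_sub 1).rpow_const (Or.inl h1t.ne')
      have d2 : HasDerivAt (fun t : ℝ => (1+t)^(-α)) ((1:ℝ) * (-α) * (1+t)^(-α-1)) t :=
        ((hasDerivAt_id t).const_add 1).rpow_const (Or.inl (by linarith [ht.1] : (1:ℝ)+t ≠ 0))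
      refine (d1.sub d2).congr_deriv ?_
      ring)
    (fun t ht => by
      have h1t : (1/2:ℝ) ≤ 1 - t := by linarith [ht.2]
      have e1 : (1-t)^(-α-1) ≤ (1/2:ℝ)^(-α-1) :=
        Real.rpow_le_rpow_of_nonpos (by norm_num) h1t (by linarith)
      have e2 : ((1/2:ℝ))^(-α-1) = 2^(α+1) := by
        rw [show (1/2:ℝ) = 2⁻¹ by norm_num, Real.inv_rpow (by norm_num),
          ← Real.rpow_neg (by norm_num)]
        ring_nf
      have e3 : (2:ℝ)^(α+1) ≤ 4 := by
        calc (2:ℝ)^(α+1) ≤ 2^(2:ℝ) :=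
              Real.rpow_le_rpow_of_exponent_le one_le_two (by linarith)
          _ = 4 := by
              rw [show (2:ℝ) = ((2:ℕ):ℝ) by norm_num, Real.rpow_natCast]; norm_num
      have e4 : (1+t)^(-α-1) ≤ 1 := by
        calc (1+t)^(-α-1) ≤ (1:ℝ)^(-α-1) :=
              Real.rpow_le_rpow_of_nonpos one_pos (by linarith [ht.1]) (by linarith)
          _ = 1 := Real.one_rpow _
      have p1 : (0:ℝ) ≤ (1-t)^(-α-1) := Real.rpow_nonneg (by linarith) _
      have p2 : (0:ℝ) ≤ (1+t)^(-α-1) := Real.rpow_nonneg (by linarith [ht.1]) _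
      show |α * (1-t)^(-α-1) + α * (1+t)^(-α-1)| ≤ 5
      rw [abs_of_nonneg (by positivity)]
      nlinarith [mul_nonneg (show (0:ℝ) ≤ 1-α by linarith) p1,
        mul_nonneg (show (0:ℝ) ≤ 1-α by linarith) p2])
    hx
  simpa [h0] using key

lemma bound_pos {α : ℝ} (hα0 : 0 < α) (hα1 : α < 1) {x : ℝ}
    (hx : x ∈ Set.Icc (0:ℝ) (1/2)) :
    |(1-x)^(1-α) - (1+x)^(1-α)| ≤ 3 * x := by
  have h0 : ((1-(0:ℝ))^(1-α) - (1+(0:ℝ))^(1-α)) = 0 := by norm_num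
  have key := my_mvt (k := fun t => (1-t)^(1-α) - (1+t)^(1-α))
    (k' := fun t => (-1) * (1-α) * (1-t)^(-α) - (1:ℝ) * (1-α) * (1+t)^(-α)) (C := 3)
    (fun t ht => by
      have h1t : (0:ℝ) < 1 - t := by linarith [ht.2]
      have d1 : HasDerivAt (fun t : ℝ => (1-t)^(1-α)) ((-1) * (1-α) * (1-t)^(1-α-1)) t :=
        ((hasDerivAt_id t).const_sub 1).rpow_const (Or.inl h1t.ne')
      have d2 : HasDerivAt (fun t : ℝ => (1+t)^(1-α)) ((1:ℝ) * (1-α) * (1+t)^(1-α-1)) t :=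
        ((hasDerivAt_id t).const_add 1).rpow_const (Or.inl (by linarith [ht.1] : (1:ℝ)+t ≠ 0))
      have := d1.sub d2
      rw [show 1-α-1 = -α by ring] at this
      exact this)
    (fun t ht => by
      have h1t : (1/2:ℝ) ≤ 1 - t := by linarith [ht.2]
      have e1 : (1-t)^(-α) ≤ (1/2:ℝ)^(-α) :=
        Real.rpow_le_rpow_of_nonpos (by norm_num) h1t (by linarith)
      have e2 : ((1/2:ℝ))^(-α) ≤ 2 := by
        rw [show (1/2:ℝ) = 2⁻¹ by norm_num, Real.inv_rpow (by norm_num),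
          ← Real.rpow_neg (by norm_num)]
        calc (2:ℝ)^(-(-α)) ≤ 2^(1:ℝ) := by
              apply Real.rpow_le_rpow_of_exponent_le one_le_two; simp; linarith
          _ = 2 := Real.rpow_one 2
      have e4 : (1+t)^(-α) ≤ 1 := by
        calc (1+t)^(-α) ≤ (1:ℝ)^(-α) :=
              Real.rpow_le_rpow_of_nonpos one_pos (by linarith [ht.1]) (by linarith)
          _ = 1 := Real.one_rpow _
      have p1 : (0:ℝ) ≤ (1-t)^(-α) := Real.rpow_nonneg (by linarith) _
      have p2 : (0:ℝ) ≤ (1+t)^(-α) := Real.rpow_nonneg (by linarith [ht.1]) _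
      show |(-1) * (1-α) * (1-t)^(-α) - (1:ℝ) * (1-α) * (1+t)^(-α)| ≤ 3
      have habs : |(-1) * (1-α) * (1-t)^(-α) - (1:ℝ) * (1-α) * (1+t)^(-α)|
          = (1-α) * ((1-t)^(-α) + (1+t)^(-α)) := by
        rw [abs_of_nonpos (by nlinarith)]; ring
      rw [habs]
      nlinarith [mul_nonneg (show (0:ℝ) ≤ 1-α by linarith) p1,
        mul_nonneg (show (0:ℝ) ≤ 1-α by linarith) p2])
    hx
  simpa [h0] using key

lemma my_integrable {α : ℝ} (hα0 : 0 < α) (hα1 : α < 1) :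
    IntervalIntegrable (fun x : ℝ => x ^ (α - 2) * (-(1 - x) ^ (-α) + (1 + x) ^ (-α)))
      MeasureTheory.volume 0 1 := by
  have part1 : IntervalIntegrable
      (fun x : ℝ => x ^ (α - 2) * (-(1 - x) ^ (-α) + (1 + x) ^ (-α)))
      MeasureTheory.volume 0 (1/2) := by
    have hdom : IntervalIntegrable (fun x : ℝ => 5 * x ^ (α - 1))
        MeasureTheory.volume 0 (1/2) :=
      (intervalIntegral.intervalIntegrable_rpow' (by linarith : (-1:ℝ) < α - 1)).const_mul 5
    apply hdom.mono_fun
    · apply Measurable.aestronglyMeasurable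
      fun_prop
    · rw [Set.uIoc_of_le (by norm_num : (0:ℝ) ≤ 1/2)]
      filter_upwards [MeasureTheory.ae_restrict_mem measurableSet_Ioc] with x hx
      have hx0 : 0 < x := hx.1
      have hb := bound_neg hα0 hα1 (Set.mem_Icc.2 ⟨hx0.le, hx.2⟩)
      have hp : (0:ℝ) ≤ x ^ (α - 2) := Real.rpow_nonneg hx0.le _
      rw [Real.norm_eq_abs, Real.norm_eq_abs, abs_mul, abs_of_nonneg hp]
      have h1 : |(-(1 - x) ^ (-α) + (1 + x) ^ (-α))| = |(1-x)^(-α) - (1+x)^(-α)| := by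
        rw [← abs_neg]; ring_nf
      rw [h1]
      have h2 : x ^ (α - 2) * |(1-x)^(-α) - (1+x)^(-α)| ≤ x ^ (α-2) * (5 * x) :=
        mul_le_mul_of_nonneg_left (hb) hp
      have h3 : x ^ (α-2) * (5 * x) = 5 * x ^ (α - 1) := by
        rw [show α - 1 = (α - 2) + 1 by ring, Real.rpow_add_one hx0.ne']
        ring
      rw [abs_of_nonneg (by positivity : (0:ℝ) ≤ 5 * x ^ (α-1))]
      linarith
  have part2 : IntervalIntegrable
      (fun x : ℝ => x ^ (α - 2) * (-(1 - x) ^ (-α) + (1 + x) ^ (-α)))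
      MeasureTheory.volume (1/2) 1 := by
    have h1 : IntervalIntegrable (fun x : ℝ => (1 - x) ^ (-α))
        MeasureTheory.volume (1/2) 1 := by
      have := (intervalIntegral.intervalIntegrable_rpow'
        (show (-1:ℝ) < -α by linarith) (a := 0) (b := 1/2)).comp_sub_left 1
      norm_num at this
      exact this.symm
    have hcont : ContinuousOn (fun x : ℝ => x ^ (α - 2)) (Set.uIcc (1/2 : ℝ) 1) := by
      apply ContinuousOn.rpow_const continuousOn_id
      intro x hx
      rw [Set.uIcc_of_le (by norm_num : (1/2:ℝ) ≤ 1)] at hx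
      exact Or.inl (by linarith [hx.1] : x ≠ 0)
    have h2 : IntervalIntegrable (fun x : ℝ => x ^ (α-2) * (1 - x) ^ (-α))
        MeasureTheory.volume (1/2) 1 := h1.continuousOn_mul hcont
    have h3 : IntervalIntegrable (fun x : ℝ => x ^ (α-2) * (1 + x) ^ (-α))
        MeasureTheory.volume (1/2) 1 := by
      apply ContinuousOn.intervalIntegrable
      apply hcont.mul
      apply ContinuousOn.rpow_const (by fun_prop)
      intro x hx
      rw [Set.uIcc_of_le (by norm_num : (1/2:ℝ) ≤ 1)] at hx
      exact Or.inl (by linarith [hx.1] : 1 + x ≠ 0)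
    have key := h3.sub h2
    have : (fun x : ℝ => x ^ (α - 2) * (-(1 - x) ^ (-α) + (1 + x) ^ (-α)))
        = fun x : ℝ => x ^ (α-2) * (1 + x) ^ (-α) - x ^ (α-2) * (1 - x) ^ (-α) := by
      funext x; ring
    rw [this]
    exact key
  exact part1.trans part2

lemma my_deriv {α : ℝ} (hα0 : 0 < α) (hα1 : α < 1) {x : ℝ} (hx : x ∈ Set.Ioo (0:ℝ) 1) :
    HasDerivAt (fun t : ℝ => (((1-t)/t) ^ (1-α) - ((1+t)/t) ^ (1-α)) / (1-α))
      (x ^ (α - 2) * (-(1 - x) ^ (-α) + (1 + x) ^ (-α))) x := by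
  obtain ⟨hx0, hx1⟩ := hx
  have hxne : x ≠ 0 := hx0.ne'
  have h1x : (0:ℝ) < 1 - x := by linarith
  have h1x' : (0:ℝ) < 1 + x := by linarith
  have d1 : HasDerivAt (fun t : ℝ => (1-t)/t) ((-1 * x - (1-x) * 1) / x^2) x :=
    ((hasDerivAt_id x).const_sub 1).div (hasDerivAt_id x) hxne
  have d2 : HasDerivAt (fun t : ℝ => (1+t)/t) ((1 * x - (1+x) * 1) / x^2) x :=
    ((hasDerivAt_id x).const_add 1).div (hasDerivAt_id x) hxne
  have p1 : (0:ℝ) < (1-x)/x := div_pos h1x hx0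
  have p2 : (0:ℝ) < (1+x)/x := div_pos h1x' hx0
  have d1p := (d1.rpow_const (p := 1-α) (Or.inl p1.ne')).sub
    (d2.rpow_const (p := 1-α) (Or.inl p2.ne'))
  have dF := d1p.div_const (1-α)
  refine dF.congr_deriv ?_
  rw [show (1:ℝ)-α-1 = -α by ring]
  rw [Real.div_rpow h1x.le hx0.le, Real.div_rpow h1x'.le hx0.le]
  have hxα : x ^ (-α) = (x ^ α)⁻¹ := Real.rpow_neg hx0.le α
  have hxα2 : x ^ (α - 2) = x ^ α / x ^ 2 := by
    rw [show α - 2 = α + (-2:ℝ) by ring, Real.rpow_add hx0,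
      show ((-2:ℝ)) = -((2:ℕ):ℝ) by norm_num, Real.rpow_neg hx0.le, Real.rpow_natCast]
    ring
  have hxαpos : (0:ℝ) < x ^ α := Real.rpow_pos_of_pos hx0 α
  rw [hxα, hxα2]
  have hx2 : (x:ℝ)^2 ≠ 0 := pow_ne_zero 2 hxne
  have hone : (1:ℝ) - α ≠ 0 := by linarith
  have hsplit : x ^ 2 - x ^ 2 * α = x ^ 2 * (1 - α) := by ring
  field_simp [hone]
  ring

/-- For `0 < α < 1`, `∫₀¹ x^{α-2}(-(1-x)^{-α} + (1+x)^{-α}) dx = 2^{1-α}/(α-1)`. -/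
theorem stmt_2 (α : ℝ) (hα0 : 0 < α) (hα1 : α < 1) :
    ∫ x in (0:ℝ)..1, x ^ (α - 2) * (-(1 - x) ^ (-α) + (1 + x) ^ (-α)) =
      2 ^ (1 - α) / (α - 1) := by
  have hone : (1:ℝ) - α ≠ 0 := by linarith
  have ha : Filter.Tendsto (fun t : ℝ => (((1-t)/t) ^ (1-α) - ((1+t)/t) ^ (1-α)) / (1-α))
      (nhdsWithin 0 (Set.Ioi 0)) (nhds 0) := by
    apply squeeze_zero_norm'
      (a := fun t : ℝ => (3 / (1-α)) * t ^ α)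
    · filter_upwards [Ioo_mem_nhdsGT_of_mem (by norm_num : (0:ℝ) ∈ Set.Ico 0 (1/2))] with t ht
      obtain ⟨ht0, ht2⟩ := ht
      have h1t : (0:ℝ) ≤ 1 - t := by linarith
      have h1t' : (0:ℝ) ≤ 1 + t := by linarith
      have hsplit : ∀ a : ℝ, 0 ≤ a → (a/t) ^ (1-α) = a ^ (1-α) * t ^ (α-1) := by
        intro a hA
        rw [Real.div_rpow hA ht0.le, show α - 1 = -(1-α) by ring,
          Real.rpow_neg ht0.le, div_eq_mul_inv]
      rw [Real.norm_eq_abs, abs_div, abs_of_pos (by linarith : (0:ℝ) < 1 - α),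
        hsplit _ h1t, hsplit _ h1t']
      have : (1-t) ^ (1-α) * t ^ (α-1) - (1+t) ^ (1-α) * t ^ (α-1)
          = ((1-t) ^ (1-α) - (1+t) ^ (1-α)) * t ^ (α-1) := by ring
      rw [this, abs_mul, abs_of_nonneg (Real.rpow_nonneg ht0.le (α-1))]
      have hb := bound_pos hα0 hα1 (Set.mem_Icc.2 ⟨ht0.le, ht2.le⟩)
      have h2 : |(1-t) ^ (1-α) - (1+t) ^ (1-α)| * t ^ (α-1) ≤ (3*t) * t ^ (α-1) :=
        mul_le_mul_of_nonneg_right hb (Real.rpow_nonneg ht0.le _)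
      have h3 : (3*t) * t ^ (α-1) = 3 * t ^ α := by
        rw [show α = (α - 1) + 1 by ring, Real.rpow_add_one ht0.ne']
        ring_nf
      rw [div_le_iff₀ (by linarith : (0:ℝ) < 1 - α)]
      have h4 : 3 / (1-α) * t ^ α * (1-α) = 3 * t ^ α := by field_simp
      rw [h4, ← h3]
      exact h2
    · have hc : Filter.Tendsto (fun t : ℝ => t ^ α) (nhdsWithin 0 (Set.Ioi 0)) (nhds 0) := by
        have := (Real.continuousAt_rpow_const 0 α (Or.inr hα0.le)).tendsto
        rw [Real.zero_rpow hα0.ne'] at this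
        exact this.mono_left nhdsWithin_le_nhds
      have := hc.const_mul (3 / (1-α))
      simpa using this
  have hb : Filter.Tendsto (fun t : ℝ => (((1-t)/t) ^ (1-α) - ((1+t)/t) ^ (1-α)) / (1-α))
      (nhdsWithin 1 (Set.Iio 1)) (nhds (2 ^ (1-α) / (α-1))) := by
    have hcont : ContinuousAt (fun t : ℝ => (((1-t)/t) ^ (1-α) - ((1+t)/t) ^ (1-α)) / (1-α)) 1 := by
      apply ContinuousAt.div_const
      apply ContinuousAt.sub
      · apply ContinuousAt.rpow_const
        · exact (continuousAt_const.sub continuousAt_id).div continuousAt_id (by norm_num)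
        · right; linarith
      · apply ContinuousAt.rpow_const
        · exact (continuousAt_const.add continuousAt_id).div continuousAt_id (by norm_num)
        · right; linarith
    have hval : (((1-(1:ℝ))/1) ^ (1-α) - ((1+(1:ℝ))/1) ^ (1-α)) / (1-α) = 2 ^ (1-α) / (α-1) := by
      norm_num
      rw [Real.zero_rpow hone, eq_div_iff (sub_ne_zero.mpr hα1.ne)]
      field_simp
      ring
    have := hcont.tendsto.mono_left
      (nhdsWithin_le_nhds : nhdsWithin (1:ℝ) (Set.Iio 1) ≤ nhds 1)
    rw [hval] at this
    exact this
  have := intervalIntegral.integral_eq_sub_of_hasDerivAt_of_tendsto (one_pos)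
    (fun x hx => my_deriv hα0 hα1 hx) (my_integrable hα0 hα1) ha hb
  rw [this]; ring
end

section
/- Let 0 < α < 1. Then ∫₀¹ x^{α-2}(-(1-x)^{-α}+(1+x)^{-α}) dx + ∫₀¹ x^{2α}((1-x)^{-α}+(1+x)^{-α}) dx < 0. -/
set_option maxHeartbeats 1000000

open MeasureTheory intervalIntegral Set Filter Topology

/-- For `0 < α < 1`,
`∫₀¹ x^{α-2}(-(1-x)^{-α}+(1+x)^{-α}) dx + ∫₀¹ x^{2α}((1-x)^{-α}+(1+x)^{-α}) dx < 0`. -/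
theorem stmt_4 (α : ℝ) (hα0 : 0 < α) (hα1 : α < 1) :
    (∫ x in (0:ℝ)..1, x ^ (α - 2) * (-(1 - x) ^ (-α) + (1 + x) ^ (-α))) +
      (∫ x in (0:ℝ)..1, x ^ (2 * α) * ((1 - x) ^ (-α) + (1 + x) ^ (-α))) < 0 := by
  have h1α : (0:ℝ) < 1 - α := by linarith
  -- integrability of the two pieces of `h x = (1-x)^(-α) + (1+x)^(-α)` on [0,1]
  have IA : IntervalIntegrable (fun x : ℝ => (1 - x) ^ (-α)) volume 0 1 := by
    have h := (intervalIntegrable_rpow' (a := 0) (b := 1)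
      (show (-1:ℝ) < -α by linarith)).comp_sub_left 1
    norm_num at h
    exact h.symm
  have IB : IntervalIntegrable (fun x : ℝ => (1 + x) ^ (-α)) volume 0 1 := by
    apply ContinuousOn.intervalIntegrable
    intro x hx
    rw [uIcc_of_le (by norm_num : (0:ℝ) ≤ 1)] at hx
    exact ((continuousAt_const.add continuousAt_id).rpow_const
      (Or.inl (by nlinarith [hx.1] : (1:ℝ) + x ≠ 0))).continuousWithinAt
  have Ih : IntervalIntegrable (fun x : ℝ => (1 - x) ^ (-α) + (1 + x) ^ (-α)) volume 0 1 :=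
    IA.add IB
  -- value of ∫₀¹ h
  have VA : (∫ x in (0:ℝ)..1, (1 - x) ^ (-α)) = (1 - α)⁻¹ := by
    have h := integral_comp_sub_left (a := (0:ℝ)) (b := 1) (fun y : ℝ => y ^ (-α)) 1
    norm_num at h
    rw [h, integral_rpow (Or.inl (by linarith)),
      Real.zero_rpow (by linarith : (0:ℝ) < -α + 1).ne', Real.one_rpow,
      show -α + 1 = 1 - α by ring]
    norm_num
  have VB : (∫ x in (0:ℝ)..1, (1 + x) ^ (-α)) = ((2:ℝ) ^ (1 - α) - 1) * (1 - α)⁻¹ := by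
    have h := integral_comp_add_left (a := (0:ℝ)) (b := 1) (fun y : ℝ => y ^ (-α)) 1
    norm_num at h
    rw [h, integral_rpow (Or.inl (by linarith)), Real.one_rpow,
      show -α + 1 = 1 - α by ring]
    field_simp
  have VH : (∫ x in (0:ℝ)..1, ((1 - x) ^ (-α) + (1 + x) ^ (-α))) =
      (2:ℝ) ^ (1 - α) * (1 - α)⁻¹ := by
    rw [integral_add IA IB, VA, VB]
    field_simp
    ring
  -- bound for the second integral
  have hsub1 : uIcc (0:ℝ) (1/2) ⊆ uIcc 0 1 := by
    rw [uIcc_of_le (by norm_num : (0:ℝ) ≤ 1/2), uIcc_of_le (by norm_num : (0:ℝ) ≤ 1)]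
    exact Icc_subset_Icc_right (by norm_num)
  have hsub2 : uIcc ((1:ℝ)/2) 1 ⊆ uIcc 0 1 := by
    rw [uIcc_of_le (by norm_num : (1:ℝ)/2 ≤ 1), uIcc_of_le (by norm_num : (0:ℝ) ≤ 1)]
    exact Icc_subset_Icc_left (by norm_num)
  have hmeas : Measurable
      (fun x : ℝ => x ^ (2*α) * ((1 - x) ^ (-α) + (1 + x) ^ (-α))) := by
    fun_prop
  have Ib : IntervalIntegrable
      (fun x : ℝ => x ^ (2*α) * ((1 - x) ^ (-α) + (1 + x) ^ (-α))) volume 0 1 := by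
    apply Ih.mono_fun hmeas.aestronglyMeasurable.restrict
    rw [uIoc_of_le (by norm_num : (0:ℝ) ≤ 1)]
    filter_upwards [ae_restrict_mem measurableSet_Ioc] with x hx
    have hx0 : 0 < x := hx.1
    have hx1 : x ≤ 1 := hx.2
    have hA : 0 ≤ (1 - x) ^ (-α) := Real.rpow_nonneg (by linarith) _
    have hB : (0:ℝ) ≤ (1 + x) ^ (-α) := Real.rpow_nonneg (by linarith) _
    have h2 : x ^ (2*α) ≤ 1 := Real.rpow_le_one hx0.le hx1 (by positivity)
    simp only [Real.norm_eq_abs]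
    rw [abs_of_nonneg (by positivity), abs_of_nonneg (by positivity)]
    exact mul_le_of_le_one_left (by positivity) h2
  have hBsplit : (∫ x in (0:ℝ)..1, x ^ (2*α) * ((1 - x) ^ (-α) + (1 + x) ^ (-α)))
      = (∫ x in (0:ℝ)..(1/2), x ^ (2*α) * ((1 - x) ^ (-α) + (1 + x) ^ (-α)))
        + ∫ x in ((1:ℝ)/2)..1, x ^ (2*α) * ((1 - x) ^ (-α) + (1 + x) ^ (-α)) :=
    (integral_add_adjacent_intervals (Ib.mono_set hsub1) (Ib.mono_set hsub2)).symm
  have hHsplit : (∫ x in (0:ℝ)..1, ((1 - x) ^ (-α) + (1 + x) ^ (-α)))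
      = (∫ x in (0:ℝ)..(1/2), ((1 - x) ^ (-α) + (1 + x) ^ (-α)))
        + ∫ x in ((1:ℝ)/2)..1, ((1 - x) ^ (-α) + (1 + x) ^ (-α)) :=
    (integral_add_adjacent_intervals (Ih.mono_set hsub1) (Ih.mono_set hsub2)).symm
  have hbd1 : (∫ x in (0:ℝ)..(1/2), x ^ (2*α) * ((1 - x) ^ (-α) + (1 + x) ^ (-α)))
      ≤ (1/2:ℝ) ^ (2*α) * ∫ x in (0:ℝ)..(1/2), ((1 - x) ^ (-α) + (1 + x) ^ (-α)) := by
    rw [← intervalIntegral.integral_const_mul]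
    apply integral_mono_on (by norm_num) (Ib.mono_set hsub1)
      ((Ih.mono_set hsub1).const_mul _)
    intro x hx
    have hA : 0 ≤ (1 - x) ^ (-α) := Real.rpow_nonneg (by linarith [hx.2]) _
    have hB : (0:ℝ) ≤ (1 + x) ^ (-α) := Real.rpow_nonneg (by linarith [hx.1]) _
    exact mul_le_mul_of_nonneg_right
      (Real.rpow_le_rpow hx.1 hx.2 (by positivity)) (by positivity)
  have hbd2 : (∫ x in ((1:ℝ)/2)..1, x ^ (2*α) * ((1 - x) ^ (-α) + (1 + x) ^ (-α)))
      ≤ ∫ x in ((1:ℝ)/2)..1, ((1 - x) ^ (-α) + (1 + x) ^ (-α)) := by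
    apply integral_mono_on (by norm_num) (Ib.mono_set hsub2) (Ih.mono_set hsub2)
    intro x hx
    have hA : 0 ≤ (1 - x) ^ (-α) := Real.rpow_nonneg (by linarith [hx.2]) _
    have hB : (0:ℝ) ≤ (1 + x) ^ (-α) := Real.rpow_nonneg (by linarith [hx.1]) _
    exact mul_le_of_le_one_left (by positivity)
      (Real.rpow_le_one (by linarith [hx.1]) hx.2 (by positivity))
  have hH1pos : (1/2:ℝ) ≤ ∫ x in (0:ℝ)..(1/2), ((1 - x) ^ (-α) + (1 + x) ^ (-α)) := by
    have h := integral_mono_on (a := (0:ℝ)) (b := 1/2) (μ := volume)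
      (f := fun _ : ℝ => (1:ℝ)) (by norm_num) intervalIntegrable_const
      (Ih.mono_set hsub1) ?_
    · simpa using h
    · intro x hx
      have hA : 1 ≤ (1 - x) ^ (-α) :=
        Real.one_le_rpow_of_pos_of_le_one_of_nonpos (by linarith [hx.2])
          (by linarith [hx.1]) (by linarith)
      have hB : (0:ℝ) ≤ (1 + x) ^ (-α) := Real.rpow_nonneg (by linarith [hx.1]) _
      linarith
  have hlt : ((1:ℝ)/2) ^ (2*α) < 1 :=
    Real.rpow_lt_one (by norm_num) (by norm_num) (by positivity)
  have hB : (∫ x in (0:ℝ)..1, x ^ (2*α) * ((1 - x) ^ (-α) + (1 + x) ^ (-α)))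
      < (2:ℝ) ^ (1 - α) * (1 - α)⁻¹ := by
    rw [hBsplit, ← VH, hHsplit]
    have := mul_lt_of_lt_one_left (a := ((1:ℝ)/2) ^ (2*α))
      (b := ∫ x in (0:ℝ)..(1/2), ((1 - x) ^ (-α) + (1 + x) ^ (-α)))
      (by linarith) hlt
    linarith
  -- first integral via FTC with limits at the endpoints
  set φ : ℝ → ℝ :=
    fun x => (1 - α)⁻¹ * (x ^ (α - 1) * ((1 - x) ^ (1 - α) - (1 + x) ^ (1 - α))) with hφ
  have hderiv : ∀ x ∈ Ioo (0:ℝ) 1,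
      HasDerivAt φ (x ^ (α - 2) * (-(1 - x) ^ (-α) + (1 + x) ^ (-α))) x := by
    intro x hx
    have hx0 : 0 < x := hx.1
    have h1x : 0 < 1 - x := by linarith [hx.2]
    have h1x' : 0 < 1 + x := by linarith
    have d1 : HasDerivAt (fun y : ℝ => y ^ (α - 1)) ((α - 1) * x ^ (α - 1 - 1)) x :=
      Real.hasDerivAt_rpow_const (Or.inl hx0.ne')
    have d2 : HasDerivAt (fun y : ℝ => (1 - y) ^ (1 - α))
        ((-1) * (1 - α) * (1 - x) ^ (1 - α - 1)) x :=
      ((hasDerivAt_id x).const_sub 1).rpow_const (Or.inl h1x.ne')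
    have d3 : HasDerivAt (fun y : ℝ => (1 + y) ^ (1 - α))
        (1 * (1 - α) * (1 + x) ^ (1 - α - 1)) x :=
      ((hasDerivAt_id x).const_add 1).rpow_const (Or.inl h1x'.ne')
    have D := (d1.mul (d2.sub d3)).const_mul ((1 - α)⁻¹)
    refine D.congr_deriv ?_
    simp only [Pi.sub_apply]
    have e1 : x ^ (α - 1) = x ^ (α - 2) * x := by
      rw [show α - 1 = α - 2 + 1 by ring, Real.rpow_add_one hx0.ne']
    have e2 : (1 - x) ^ (1 - α) = (1 - x) ^ (-α) * (1 - x) := by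
      rw [show (1:ℝ) - α = -α + 1 by ring, Real.rpow_add_one h1x.ne']
    have e3 : (1 + x) ^ (1 - α) = (1 + x) ^ (-α) * (1 + x) := by
      rw [show (1:ℝ) - α = -α + 1 by ring, Real.rpow_add_one h1x'.ne']
    rw [show α - 1 - 1 = α - 2 by ring, show (1:ℝ) - α - 1 = -α by ring, e1, e2, e3]
    field_simp
    ring
  have hmf : Measurable (fun x : ℝ => x ^ (α - 2) * (-(1 - x) ^ (-α) + (1 + x) ^ (-α))) := by
    fun_prop
  have hint : IntervalIntegrable
      (fun x : ℝ => x ^ (α - 2) * (-(1 - x) ^ (-α) + (1 + x) ^ (-α))) volume 0 1 := by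
    have hleft : IntervalIntegrable
        (fun x : ℝ => x ^ (α - 2) * (-(1 - x) ^ (-α) + (1 + x) ^ (-α))) volume 0 (1/2) := by
      apply IntervalIntegrable.mono_fun'
        (g := fun x : ℝ => 4 * x ^ (α - 1))
        ((intervalIntegrable_rpow' (by linarith : (-1:ℝ) < α - 1)).const_mul 4)
        hmf.aestronglyMeasurable.restrict
      rw [uIoc_of_le (by norm_num : (0:ℝ) ≤ 1/2)]
      filter_upwards [ae_restrict_mem measurableSet_Ioc] with x hx
      have hx0 : 0 < x := hx.1
      have hx2 : x ≤ 1/2 := hx.2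
      have h1x : 0 < 1 - x := by linarith
      have h1x' : 0 < 1 + x := by linarith
      have hA : (0:ℝ) ≤ (1 - x) ^ (-α) := Real.rpow_nonneg h1x.le _
      have hB : (0:ℝ) ≤ (1 + x) ^ (-α) := Real.rpow_nonneg h1x'.le _
      have hBA : (1 + x) ^ (-α) ≤ (1 - x) ^ (-α) :=
        Real.rpow_le_rpow_of_nonpos h1x (by linarith) (by linarith)
      have hX : (0:ℝ) ≤ x ^ (α - 2) := Real.rpow_nonneg hx0.le _
      have e2 : (1 - x) ^ (1 - α) = (1 - x) ^ (-α) * (1 - x) := by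
        rw [show (1:ℝ) - α = -α + 1 by ring, Real.rpow_add_one h1x.ne']
      have e3 : (1 + x) ^ (1 - α) = (1 + x) ^ (-α) * (1 + x) := by
        rw [show (1:ℝ) - α = -α + 1 by ring, Real.rpow_add_one h1x'.ne']
      have key : (1 - x) ^ (-α) * (1 - x) ≤ (1 + x) ^ (-α) * (1 + x) := by
        rw [← e2, ← e3]
        exact Real.rpow_le_rpow h1x.le (by linarith) h1α.le
      have hhalf : ((1:ℝ)/2) ^ (-α) = 2 ^ α := by
        rw [show (1/2:ℝ) = 2⁻¹ by norm_num,
          Real.inv_rpow (by norm_num : (0:ℝ) ≤ 2), ← Real.rpow_neg (by norm_num : (0:ℝ) ≤ 2),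
          neg_neg]
      have hAbound : (1 - x) ^ (-α) ≤ 2 := by
        calc (1 - x) ^ (-α) ≤ ((1:ℝ)/2) ^ (-α) :=
              Real.rpow_le_rpow_of_nonpos (by norm_num) (by linarith) (by linarith)
          _ = 2 ^ α := hhalf
          _ ≤ 2 ^ (1:ℝ) := Real.rpow_le_rpow_of_exponent_le (by norm_num) (by linarith)
          _ = 2 := Real.rpow_one 2
      have hdiff : (1 - x) ^ (-α) - (1 + x) ^ (-α) ≤ 4 * x := by
        nlinarith [mul_le_mul_of_nonneg_right hBA hx0.le,
          mul_le_mul_of_nonneg_right hAbound hx0.le, key]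
      have e1 : x ^ (α - 2) * x = x ^ (α - 1) := by
        rw [show α - 1 = α - 2 + 1 by ring, Real.rpow_add_one hx0.ne']
      simp only [Real.norm_eq_abs]
      rw [abs_of_nonpos (by nlinarith [mul_le_mul_of_nonneg_left hBA hX] :
        x ^ (α - 2) * (-(1 - x) ^ (-α) + (1 + x) ^ (-α)) ≤ 0)]
      calc -(x ^ (α - 2) * (-(1 - x) ^ (-α) + (1 + x) ^ (-α)))
          = x ^ (α - 2) * ((1 - x) ^ (-α) - (1 + x) ^ (-α)) := by ring
        _ ≤ x ^ (α - 2) * (4 * x) := mul_le_mul_of_nonneg_left hdiff hX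
        _ = 4 * (x ^ (α - 2) * x) := by ring
        _ = 4 * x ^ (α - 1) := by rw [e1]
    have hright : IntervalIntegrable
        (fun x : ℝ => x ^ (α - 2) * (-(1 - x) ^ (-α) + (1 + x) ^ (-α))) volume (1/2) 1 := by
      apply IntervalIntegrable.mono_fun'
        (g := fun x : ℝ => 4 * (1 - x) ^ (-α) + 4)
        (((IA.mono_set hsub2).const_mul 4).add intervalIntegrable_const)
        hmf.aestronglyMeasurable.restrict
      rw [uIoc_of_le (by norm_num : (1:ℝ)/2 ≤ 1)]
      filter_upwards [ae_restrict_mem measurableSet_Ioc] with x hx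
      have hx0 : (0:ℝ) < 1/2 := by norm_num
      have hxh : 1/2 < x := hx.1
      have hx1 : x ≤ 1 := hx.2
      have h1x : (0:ℝ) ≤ 1 - x := by linarith
      have h1x' : (0:ℝ) < 1 + x := by linarith
      have hA : (0:ℝ) ≤ (1 - x) ^ (-α) := Real.rpow_nonneg h1x _
      have hB : (0:ℝ) ≤ (1 + x) ^ (-α) := Real.rpow_nonneg h1x'.le _
      have hB1 : (1 + x) ^ (-α) ≤ 1 :=
        Real.rpow_le_one_of_one_le_of_nonpos (by linarith) (by linarith)
      have hhalf : ((1:ℝ)/2) ^ (α - 2) = 2 ^ (2 - α) := by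
        rw [show (1/2:ℝ) = 2⁻¹ by norm_num,
          Real.inv_rpow (by norm_num : (0:ℝ) ≤ 2), ← Real.rpow_neg (by norm_num : (0:ℝ) ≤ 2),
          show -(α - 2) = 2 - α by ring]
      have hX4 : x ^ (α - 2) ≤ 4 := by
        calc x ^ (α - 2) ≤ ((1:ℝ)/2) ^ (α - 2) :=
              Real.rpow_le_rpow_of_nonpos hx0 hxh.le (by linarith)
          _ = 2 ^ (2 - α) := hhalf
          _ ≤ 2 ^ (2:ℝ) := Real.rpow_le_rpow_of_exponent_le (by norm_num) (by linarith)
          _ = 4 := by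
              rw [show (2:ℝ) = ((2:ℕ):ℝ) from by norm_num, Real.rpow_natCast]
              norm_num
      have hX : (0:ℝ) ≤ x ^ (α - 2) := Real.rpow_nonneg (by linarith) _
      simp only [Real.norm_eq_abs]
      rw [abs_mul, abs_of_nonneg hX]
      calc x ^ (α - 2) * |(-(1 - x) ^ (-α) + (1 + x) ^ (-α))|
          ≤ 4 * ((1 - x) ^ (-α) + 1) := by
            apply mul_le_mul hX4 _ (abs_nonneg _) (by norm_num)
            calc |(-(1 - x) ^ (-α) + (1 + x) ^ (-α))|
                ≤ |(-(1 - x) ^ (-α))| + |(1 + x) ^ (-α)| := abs_add_le _ _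
              _ = (1 - x) ^ (-α) + (1 + x) ^ (-α) := by
                  rw [abs_neg, abs_of_nonneg hA, abs_of_nonneg hB]
              _ ≤ (1 - x) ^ (-α) + 1 := by linarith
        _ = 4 * (1 - x) ^ (-α) + 4 := by ring
    exact hleft.trans hright
  -- limit of φ at 0⁺
  have h0 : Tendsto φ (𝓝[>] (0:ℝ)) (𝓝 0) := by
    obtain ⟨d, hd⟩ : ∃ d, HasDerivAt
        (fun y : ℝ => (1 - y) ^ (1 - α) - (1 + y) ^ (1 - α)) d 0 :=
      ⟨_, (((hasDerivAt_id (0:ℝ)).const_sub 1).rpow_const (Or.inl (by norm_num))).sub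
        (((hasDerivAt_id (0:ℝ)).const_add 1).rpow_const (Or.inl (by norm_num)))⟩
    have hslope := hasDerivAt_iff_tendsto_slope.mp hd
    have htop : Tendsto (fun y : ℝ => y ^ α) (𝓝[>] (0:ℝ)) (𝓝 0) := by
      have h := (Real.continuousAt_rpow_const 0 α (Or.inr hα0.le)).tendsto
      rw [Real.zero_rpow hα0.ne'] at h
      exact h.mono_left nhdsWithin_le_nhds
    have hmul := htop.mul (hslope.mono_left
      (nhdsWithin_mono 0 (fun y hy => ne_of_gt hy)))
    have hfinal := hmul.const_mul ((1 - α)⁻¹)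
    rw [zero_mul, mul_zero] at hfinal
    apply hfinal.congr'
    filter_upwards [self_mem_nhdsWithin] with y hy
    have hy0 : (0:ℝ) < y := hy
    have hslope_eq : slope (fun y : ℝ => (1 - y) ^ (1 - α) - (1 + y) ^ (1 - α)) 0 y
        = ((1 - y) ^ (1 - α) - (1 + y) ^ (1 - α)) / y := by
      rw [slope_def_field]
      norm_num [Real.one_rpow]
    simp only [hφ, hslope_eq, Real.rpow_sub_one hy0.ne']
    ring
  -- limit of φ at 1⁻
  have h1 : Tendsto φ (𝓝[<] (1:ℝ)) (𝓝 (-(2 ^ (1 - α) * (1 - α)⁻¹))) := by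
    have hcont : ContinuousAt φ 1 := by
      apply ContinuousAt.mul continuousAt_const
      apply ContinuousAt.mul
      · exact Real.continuousAt_rpow_const 1 (α - 1) (Or.inl one_ne_zero)
      · exact ((continuousAt_const.sub continuousAt_id).rpow_const
          (Or.inr h1α.le)).sub
          ((continuousAt_const.add continuousAt_id).rpow_const (Or.inr h1α.le))
    have hval : φ 1 = -(2 ^ (1 - α) * (1 - α)⁻¹) := by
      rw [hφ]
      norm_num [Real.one_rpow, Real.zero_rpow h1α.ne']
      ring
    rw [← hval]
    exact hcont.tendsto.mono_left nhdsWithin_le_nhds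
  have hAval : (∫ x in (0:ℝ)..1, x ^ (α - 2) * (-(1 - x) ^ (-α) + (1 + x) ^ (-α)))
      = -(2 ^ (1 - α) * (1 - α)⁻¹) - 0 :=
    integral_eq_sub_of_hasDerivAt_of_tendsto (by norm_num) hderiv hint h0 h1
  rw [hAval]
  linarith
end
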